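/- Let I and I' be {0,1}^d-valued random vectors, and let X and X' each be obtained by the FGM construction with the same marginal cdfs F_1,...,F_d: X_k = (1−I_k)X^[1]_k + I_k X^[2]_k and X'_k = (1−I'_k)Y^[1]_k + I'_k Y^[2]_k, where X^[1]_k and Y^[1]_k have cdf 1−(1−F_k)^2, X^[2]_k and Y^[2]_k have cdf F_k^2, and in each construction the 2d+1 random elements (the Bernoulli vector and the 2d order-statistic components) are mutually independent. Suppose that E[φ(I)] ≤ E[φ(I')] for every supermodular function φ : ℝ^d → ℝ (I precedes I' in the supermodular order). Then E[ψ(X)] ≤ E[ψ(X')] for every bounded Borel-measurable supermodular function ψ : ℝ^d → ℝ. -/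

import Mathlib

open MeasureTheory ProbabilityTheory

/-- Codomains of the `2d+1` random elements in the FGM construction. -/
def fgmType (d : ℕ) : Option (Fin d × Fin 2) → Type
  | none => Fin d → Fin 2
  | some _ => ℝ

instance fgmTypeMeasurableSpace (d : ℕ) (o : Option (Fin d × Fin 2)) :
    MeasurableSpace (fgmType d o) := by
  cases o with
  | none => exact (inferInstance : MeasurableSpace (Fin d → Fin 2))
  | some p => exact (inferInstance : MeasurableSpace ℝ)

/-- The family consisting of the Bernoulli random vector `I` together with the `2d`
order-statistic components `X j k` (`j = 0`: minimum, `j = 1`: maximum). -/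
def fgmFamily {Ω : Type*} (d : ℕ) (I : Ω → Fin d → Fin 2)
    (X : Fin 2 → Fin d → Ω → ℝ) : (o : Option (Fin d × Fin 2)) → Ω → fgmType d o
  | none => I
  | some p => X p.2 p.1

/-- A function `φ : ℝ^d → ℝ` is supermodular if
`φ(x ∨ y) + φ(x ∧ y) ≥ φ(x) + φ(y)` for all `x, y`. -/
def Supermodular {d : ℕ} (φ : (Fin d → ℝ) → ℝ) : Prop :=
  ∀ x y : Fin d → ℝ, φ x + φ y ≤ φ (x ⊔ y) + φ (x ⊓ y)

open Set Filter Topology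
namespace FGMAux

lemma integrable_of_bdd {α : Type*} [MeasurableSpace α] {μ : Measure α} [IsFiniteMeasure μ]
    {f : α → ℝ} (hf : AEStronglyMeasurable f μ) {C : ℝ} (hC : ∀ x, |f x| ≤ C) :
    Integrable f μ :=
  ⟨hf, HasFiniteIntegral.of_bounded (C := C) (ae_of_all _ (fun x => by
    simpa [Real.norm_eq_abs] using hC x))⟩

lemma exists_measure_cdf (G : ℝ → ℝ) (μmax : Measure ℝ) [IsProbabilityMeasure μmax]
    (hG : ∀ x, (μmax (Iic x)).toReal = (G x) ^ 2) (hG0 : ∀ x, 0 ≤ G x) :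
    ∃ ν : Measure ℝ, IsProbabilityMeasure ν ∧ ∀ x, ν (Iic x) = ENNReal.ofReal (G x) := by
  have hGeq : ∀ x, Real.sqrt (cdf μmax x) = G x := by
    intro x
    rw [cdf_eq_real, measureReal_def, hG x, Real.sqrt_sq (hG0 x)]
  set S : StieltjesFunction ℝ :=
    { toFun := fun x => Real.sqrt (cdf μmax x)
      mono' := fun a b hab => Real.sqrt_le_sqrt ((monotone_cdf μmax) hab)
      right_continuous' := fun x =>
        Real.continuous_sqrt.continuousAt.comp_continuousWithinAt
          ((cdf μmax).right_continuous x) } with hS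
  have hbot : Tendsto S atBot (𝓝 0) := by
    have := (Real.continuous_sqrt.tendsto 0).comp (tendsto_cdf_atBot μmax)
    simp only [Real.sqrt_zero] at this
    exact this
  have htop : Tendsto S atTop (𝓝 1) := by
    have := (Real.continuous_sqrt.tendsto 1).comp (tendsto_cdf_atTop μmax)
    simp only [Real.sqrt_one] at this
    exact this
  refine ⟨S.measure, ⟨by rw [S.measure_univ hbot htop]; simp⟩, fun x => ?_⟩
  rw [S.measure_Iic hbot x, sub_zero]
  exact congrArg ENNReal.ofReal (hGeq x)

lemma map_min_Iic_toReal (ν : Measure ℝ) [IsProbabilityMeasure ν] (x : ℝ) :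
    ((((ν.prod ν)).map (fun p : ℝ × ℝ => min p.1 p.2)) (Iic x)).toReal
      = 1 - (1 - (ν (Iic x)).toReal) ^ 2 := by
  have hm : Measurable (fun p : ℝ × ℝ => min p.1 p.2) := measurable_fst.min measurable_snd
  rw [Measure.map_apply hm measurableSet_Iic]
  have hset : (fun p : ℝ × ℝ => min p.1 p.2) ⁻¹' Iic x = (Ioi x ×ˢ Ioi x)ᶜ := by
    ext p
    simp only [mem_preimage, mem_Iic, min_le_iff, mem_compl_iff, mem_prod, mem_Ioi, not_and_or, not_lt]
  rw [hset, prob_compl_eq_one_sub (measurableSet_Ioi.prod measurableSet_Ioi),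
    Measure.prod_prod]
  have hIoi : ν (Ioi x) = 1 - ν (Iic x) := by
    rw [← prob_compl_eq_one_sub measurableSet_Iic, compl_Iic]
  have h1 : ν (Iic x) ≤ 1 := prob_le_one
  have h2 : ν (Ioi x) ≤ 1 := prob_le_one
  rw [hIoi]
  rw [ENNReal.toReal_sub_of_le (by exact mul_le_one' (hIoi ▸ h2) (hIoi ▸ h2)) ENNReal.one_ne_top,
    ENNReal.toReal_mul, ENNReal.toReal_sub_of_le h1 ENNReal.one_ne_top, ENNReal.toReal_one]
  ring

lemma map_max_Iic_toReal (ν : Measure ℝ) [IsProbabilityMeasure ν] (x : ℝ) :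
    ((((ν.prod ν)).map (fun p : ℝ × ℝ => max p.1 p.2)) (Iic x)).toReal
      = ((ν (Iic x)).toReal) ^ 2 := by
  have hm : Measurable (fun p : ℝ × ℝ => max p.1 p.2) := measurable_fst.max measurable_snd
  rw [Measure.map_apply hm measurableSet_Iic]
  have hset : (fun p : ℝ × ℝ => max p.1 p.2) ⁻¹' Iic x = Iic x ×ˢ Iic x := by
    ext p
    simp [max_le_iff, Prod.le_def]
  rw [hset, Measure.prod_prod, ENNReal.toReal_mul]
  ring

lemma ext_iic_toReal (μ ν : Measure ℝ) [IsProbabilityMeasure μ] [IsProbabilityMeasure ν]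
    (h : ∀ x, (μ (Iic x)).toReal = (ν (Iic x)).toReal) : μ = ν :=
  Measure.ext_of_Iic μ ν fun x =>
    (ENNReal.toReal_eq_toReal_iff' (measure_ne_top μ _) (measure_ne_top ν _)).mp (h x)

lemma affine_monotone {mn mx : ℝ} (h : mn ≤ mx) :
    Monotone (fun t : ℝ => (1 - t) * mn + t * mx) := by
  intro a b hab
  simp only
  nlinarith

lemma supermodular_integral {d : ℕ} {α : Type*} [MeasurableSpace α]
    (κ : Measure α) [IsProbabilityMeasure κ]
    (mn mx : α → Fin d → ℝ) (hmn : Measurable mn) (hmx : Measurable mx)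
    (hle : ∀ w k, mn w k ≤ mx w k)
    (ψ : (Fin d → ℝ) → ℝ) (hψ : Measurable ψ) (C : ℝ) (hC : ∀ x, |ψ x| ≤ C)
    (hsm : Supermodular ψ) :
    Supermodular (fun x : Fin d → ℝ =>
      ∫ w, ψ (fun k => (1 - x k) * mn w k + x k * mx w k) ∂κ) := by
  have hmeas : ∀ x : Fin d → ℝ,
      Measurable (fun w => ψ (fun k => (1 - x k) * mn w k + x k * mx w k)) := by
    intro x
    exact hψ.comp (measurable_pi_iff.mpr fun k =>
      (((hmn.comp measurable_id).eval (a := k)).const_mul _).add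
        (((hmx.comp measurable_id).eval (a := k)).const_mul _))
  have hint : ∀ x : Fin d → ℝ,
      Integrable (fun w => ψ (fun k => (1 - x k) * mn w k + x k * mx w k)) κ :=
    fun x => integrable_of_bdd (hmeas x).aestronglyMeasurable (fun w => hC _)
  intro x y
  rw [← integral_add (hint x) (hint y), ← integral_add (hint _) (hint _)]
  refine integral_mono ((hint x).add (hint y)) ((hint _).add (hint _)) (fun w => ?_)
  simp only [Pi.add_apply]
  have hmax : (fun k => (1 - (x ⊔ y) k) * mn w k + (x ⊔ y) k * mx w k)
      = (fun k => (1 - x k) * mn w k + x k * mx w k)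
        ⊔ (fun k => (1 - y k) * mn w k + y k * mx w k) := by
    funext k
    simp only [Pi.sup_apply]
    exact (affine_monotone (hle w k)).map_max
  have hmin : (fun k => (1 - (x ⊓ y) k) * mn w k + (x ⊓ y) k * mx w k)
      = (fun k => (1 - x k) * mn w k + x k * mx w k)
        ⊓ (fun k => (1 - y k) * mn w k + y k * mx w k) := by
    funext k
    simp only [Pi.inf_apply]
    exact (affine_monotone (hle w k)).map_min
  rw [hmax, hmin]
  exact hsm _ _

lemma fgm_integral_eq {Ω : Type*} [MeasurableSpace Ω] (P : Measure Ω) [IsProbabilityMeasure P]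
    (d : ℕ) (I : Ω → Fin d → Fin 2) (X : Fin 2 → Fin d → Ω → ℝ)
    (hI : Measurable I) (hX : ∀ j k, Measurable (X j k))
    (hIndep : iIndepFun (fgmFamily d I X) P)
    (ν : Fin d → Measure ℝ) [hpν : ∀ k, IsProbabilityMeasure (ν k)]
    (hmin : ∀ k, P.map (X 0 k) = ((ν k).prod (ν k)).map (fun p => min p.1 p.2))
    (hmax : ∀ k, P.map (X 1 k) = ((ν k).prod (ν k)).map (fun p => max p.1 p.2))
    (ψ : (Fin d → ℝ) → ℝ) (hψ : Measurable ψ) (C : ℝ) (hC : ∀ x, |ψ x| ≤ C) :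
    ∫ ω, ψ (fun k => (1 - ((I ω k : ℕ) : ℝ)) * X 0 k ω + ((I ω k : ℕ) : ℝ) * X 1 k ω) ∂P
      = ∫ ω, (fun x : Fin d → ℝ => ∫ w, ψ (fun k =>
            (1 - x k) * min (w k).1 (w k).2 + x k * max (w k).1 (w k).2)
          ∂(Measure.pi fun k => (ν k).prod (ν k))) (fun k => ((I ω k : ℕ) : ℝ)) ∂P := by
  classical
  set κ : Measure (Fin d → ℝ × ℝ) := Measure.pi fun k => (ν k).prod (ν k) with hκdef
  set μp : Fin d × Fin 2 → Measure ℝ := fun p => P.map (X p.2 p.1) with hμpdef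
  haveI hμp_prob : ∀ p, IsProbabilityMeasure (μp p) :=
    fun p => Measure.isProbabilityMeasure_map (hX p.2 p.1).aemeasurable
  set Z : Ω → (Fin d × Fin 2) → ℝ := fun ω p => X p.2 p.1 ω with hZdef
  have hZm : Measurable Z := measurable_pi_iff.mpr fun p => hX p.2 p.1
  have hfam : ∀ o, Measurable (fgmFamily d I X o) := by
    rintro (_ | p)
    · exact hI
    · exact hX p.2 p.1
  -- the law of Z is the product measure
  have hmapZ : P.map Z = Measure.pi μp := by
    refine (Measure.pi_eq fun s hs => ?_).symm
    rw [Measure.map_apply hZm (MeasurableSet.univ_pi hs)]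
    set s' : ∀ o : Option (Fin d × Fin 2), Set (fgmType d o) :=
      fun o => Option.rec Set.univ (fun p => s p) o with hs'def
    have hpre : Z ⁻¹' Set.pi Set.univ s
        = ⋂ o ∈ (Finset.univ.image Option.some : Finset (Option (Fin d × Fin 2))),
            fgmFamily d I X o ⁻¹' s' o := by
      ext ω
      simp only [Set.mem_preimage, Set.mem_pi, Set.mem_univ, true_imp_iff,
        Set.mem_iInter, Finset.mem_image, Finset.mem_univ, true_and]
      constructor
      · rintro h o ⟨p, rfl⟩
        exact h p
      · intro h p
        exact h (some p) ⟨p, rfl⟩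
    rw [hpre, hIndep.measure_inter_preimage_eq_mul _ (fun o _ => ?_)]
    · rw [Finset.prod_image (fun a _ b _ h => Option.some_injective _ h)]
      refine Finset.prod_congr rfl fun p _ => ?_
      rw [hμpdef]
      exact (Measure.map_apply (hX p.2 p.1) (hs p)).symm
    · rcases o with _ | p
      · exact MeasurableSet.univ
      · exact hs p
  -- independence of I and Z
  have hIZ : IndepFun I Z P := by
    have h := hIndep.indepFun_finset {none} (Finset.univ.image Option.some)
      (by simp) hfam
    have h2 := h.comp
      (φ := fun v : ∀ i : ({none} : Finset (Option (Fin d × Fin 2))), fgmType d i =>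
        (v ⟨none, Finset.mem_singleton_self _⟩ : Fin d → Fin 2))
      (ψ := fun v : ∀ i : (Finset.univ.image Option.some :
          Finset (Option (Fin d × Fin 2))), fgmType d i =>
        (fun p : Fin d × Fin 2 => (v ⟨some p, by simp⟩ : ℝ)))
      (measurable_pi_apply (X := fun i : ({none} : Finset (Option (Fin d × Fin 2))) => fgmType d i) _) (measurable_pi_iff.mpr fun p => measurable_pi_apply _)
    exact h2
  -- abbreviations
  set coe2 : Fin 2 → ℝ := fun j => ((j : ℕ) : ℝ) with hcoe2def
  set g : (Fin d → Fin 2) → ((Fin d × Fin 2) → ℝ) → (Fin d → ℝ) :=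
    fun i z k => (1 - coe2 (i k)) * z (k, 0) + coe2 (i k) * z (k, 1) with hgdef
  set sel : Fin 2 → ℝ × ℝ → ℝ :=
    fun j p => if j = 0 then min p.1 p.2 else max p.1 p.2 with hseldef
  have h01' : ∀ j : Fin 2, j = 0 ∨ j = 1 := by decide
  have hselm : ∀ j, Measurable (sel j) := by
    intro j
    rcases h01' j with h | h <;> subst h <;> simp only [hseldef, if_pos rfl, if_neg (by decide : (1 : Fin 2) ≠ 0)]
    · exact measurable_fst.min measurable_snd
    · exact measurable_fst.max measurable_snd
  have h01 : ∀ j : Fin 2, j = 0 ∨ j = 1 := by decide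
  have hgm : Measurable
      (fun q : (Fin d → Fin 2) × ((Fin d × Fin 2) → ℝ) => ψ (g q.1 q.2)) := by
    refine hψ.comp (measurable_pi_iff.mpr fun k => ?_)
    have h1 : Measurable fun q : (Fin d → Fin 2) × ((Fin d × Fin 2) → ℝ) =>
        coe2 (q.1 k) :=
      (measurable_of_countable coe2).comp ((measurable_pi_apply k).comp measurable_fst)
    have h2 : Measurable fun q : (Fin d → Fin 2) × ((Fin d × Fin 2) → ℝ) =>
        q.2 (k, 0) := (measurable_pi_apply _).comp measurable_snd
    have h3 : Measurable fun q : (Fin d → Fin 2) × ((Fin d × Fin 2) → ℝ) =>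
        q.2 (k, 1) := (measurable_pi_apply _).comp measurable_snd
    exact ((measurable_const.sub h1).mul h2).add (h1.mul h3)
  haveI : IsProbabilityMeasure (P.map I) := Measure.isProbabilityMeasure_map hI.aemeasurable
  haveI : IsProbabilityMeasure (P.map Z) := Measure.isProbabilityMeasure_map hZm.aemeasurable
  haveI hpiμp : IsProbabilityMeasure (Measure.pi μp) := by rw [← hmapZ]; infer_instance
  have hIZpair : P.map (fun ω => (I ω, Z ω)) = (P.map I).prod (P.map Z) :=
    (indepFun_iff_map_prod_eq_prod_map_map hI.aemeasurable hZm.aemeasurable).mp hIZ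
  have main1 : ∫ ω, ψ (g (I ω) (Z ω)) ∂P
      = ∫ i, ∫ z, ψ (g i z) ∂(Measure.pi μp) ∂(P.map I) := by
    have e1 : ∫ q : (Fin d → Fin 2) × ((Fin d × Fin 2) → ℝ), ψ (g q.1 q.2)
          ∂(P.map (fun ω => (I ω, Z ω)))
        = ∫ ω, ψ (g (I ω) (Z ω)) ∂P :=
      integral_map (hI.aemeasurable.prodMk hZm.aemeasurable) hgm.aestronglyMeasurable
    rw [← e1, hIZpair, integral_prod _
      (integrable_of_bdd hgm.aestronglyMeasurable (fun q => hC _)), hmapZ]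
  -- identification of the inner integral
  have hgz : ∀ (i : Fin d → Fin 2) (z : (Fin d × Fin 2) → ℝ),
      g i z = fun k => z (k, i k) := by
    intro i z
    funext k
    rcases h01 (i k) with h | h <;> rw [hgdef] <;> simp [h, hcoe2def]
  have hsel1 : ∀ (i : Fin d → Fin 2) (w : Fin d → ℝ × ℝ),
      (fun k => sel (i k) (w k))
        = fun k => (1 - coe2 (i k)) * min (w k).1 (w k).2
            + coe2 (i k) * max (w k).1 (w k).2 := by
    intro i w
    funext k
    rcases h01 (i k) with h | h <;> rw [hseldef] <;> simp [h, hcoe2def]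
  have hinner : ∀ i : Fin d → Fin 2,
      ∫ z, ψ (g i z) ∂(Measure.pi μp)
        = ∫ w, ψ (fun k => (1 - coe2 (i k)) * min (w k).1 (w k).2
            + coe2 (i k) * max (w k).1 (w k).2) ∂κ := by
    intro i
    have hprojm : Measurable (fun z : (Fin d × Fin 2) → ℝ => fun k : Fin d => z (k, i k)) :=
      measurable_pi_iff.mpr fun k => measurable_pi_apply _
    have hselmap : (Measure.pi μp).map (fun z (k : Fin d) => z (k, i k))
        = Measure.pi (fun k => μp (k, i k)) := by
      refine (Measure.pi_eq fun s hs => ?_).symm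
      rw [Measure.map_apply hprojm (MeasurableSet.univ_pi hs)]
      have hpre2 : (fun z (k : Fin d) => z (k, i k)) ⁻¹' Set.pi Set.univ s
          = Set.pi Set.univ (fun p : Fin d × Fin 2 =>
              if p.2 = i p.1 then s p.1 else Set.univ) := by
        ext z
        simp only [Set.mem_preimage, Set.mem_pi, Set.mem_univ, true_imp_iff]
        constructor
        · rintro h ⟨k, j⟩
          by_cases hp : j = i k
          · subst hp
            simpa using h k
          · simp [hp]
        · intro h k
          simpa using h (k, i k)
      rw [hpre2, Measure.pi_pi, Fintype.prod_prod_type]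
      refine Finset.prod_congr rfl fun k _ => ?_
      have : ∀ j : Fin 2, μp (k, j) (if (k, j).2 = i ((k, j) : Fin d × Fin 2).1
          then s ((k, j) : Fin d × Fin 2).1 else Set.univ)
          = if j = i k then μp (k, j) (s k) else 1 := by
        intro j
        by_cases hj : j = i k <;> simp [hj]
      simp only [this]
      rw [Finset.prod_ite_eq' Finset.univ (i k) (fun j => μp (k, j) (s k))]
      simp
    have hMP : MeasurePreserving (fun w (k : Fin d) => sel (i k) (w k)) κ
        (Measure.pi fun k => μp (k, i k)) := by
      refine measurePreserving_pi _ _ (fun k => ⟨hselm (i k), ?_⟩)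
      rcases h01 (i k) with h | h <;> rw [h]
      · have : sel 0 = fun p : ℝ × ℝ => min p.1 p.2 := by
          rw [hseldef]; funext p; simp
        rw [this, hμpdef]
        exact (hmin k).symm
      · have : sel 1 = fun p : ℝ × ℝ => max p.1 p.2 := by
          rw [hseldef]; funext p; simp
        rw [this, hμpdef]
        exact (hmax k).symm
    calc ∫ z, ψ (g i z) ∂(Measure.pi μp)
        = ∫ z, ψ (fun k => z (k, i k)) ∂(Measure.pi μp) := by
          refine integral_congr_ae (ae_of_all _ fun z => ?_)
          exact congrArg ψ (hgz i z)
      _ = ∫ v, ψ v ∂((Measure.pi μp).map (fun z (k : Fin d) => z (k, i k))) :=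
          (integral_map hprojm.aemeasurable hψ.aestronglyMeasurable).symm
      _ = ∫ v, ψ v ∂(Measure.pi (fun k => μp (k, i k))) := by rw [hselmap]
      _ = ∫ w, ψ (fun k => sel (i k) (w k)) ∂κ := by
          rw [← hMP.map_eq]
          exact integral_map hMP.measurable.aemeasurable hψ.aestronglyMeasurable
      _ = ∫ w, ψ (fun k => (1 - coe2 (i k)) * min (w k).1 (w k).2
            + coe2 (i k) * max (w k).1 (w k).2) ∂κ := by
          refine integral_congr_ae (ae_of_all _ fun w => ?_)
          exact congrArg ψ (hsel1 i w)
  -- put everything together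
  have hΦm : Measurable (fun i : Fin d → Fin 2 =>
      ∫ w, ψ (fun k => (1 - coe2 (i k)) * min (w k).1 (w k).2
        + coe2 (i k) * max (w k).1 (w k).2) ∂κ) := measurable_of_countable _
  calc ∫ ω, ψ (fun k => (1 - ((I ω k : ℕ) : ℝ)) * X 0 k ω
          + ((I ω k : ℕ) : ℝ) * X 1 k ω) ∂P
      = ∫ ω, ψ (g (I ω) (Z ω)) ∂P := rfl
    _ = ∫ i, ∫ z, ψ (g i z) ∂(Measure.pi μp) ∂(P.map I) := main1
    _ = ∫ i, (∫ w, ψ (fun k => (1 - coe2 (i k)) * min (w k).1 (w k).2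
          + coe2 (i k) * max (w k).1 (w k).2) ∂κ) ∂(P.map I) :=
        integral_congr_ae (ae_of_all _ fun i => hinner i)
    _ = ∫ ω, (fun x : Fin d → ℝ => ∫ w, ψ (fun k =>
            (1 - x k) * min (w k).1 (w k).2 + x k * max (w k).1 (w k).2) ∂κ)
          (fun k => coe2 (I ω k)) ∂P :=
        integral_map hI.aemeasurable hΦm.aestronglyMeasurable
    _ = ∫ ω, (fun x : Fin d → ℝ => ∫ w, ψ (fun k =>
            (1 - x k) * min (w k).1 (w k).2 + x k * max (w k).1 (w k).2)
          ∂(Measure.pi fun k => (ν k).prod (ν k))) (fun k => ((I ω k : ℕ) : ℝ)) ∂P := rfl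


end FGMAux

open FGMAux in
theorem fgm_supermodular_order {Ω : Type*} [MeasurableSpace Ω]
    (P : Measure Ω) [IsProbabilityMeasure P] (d : ℕ) (F : Fin d → ℝ → ℝ)
    (I I' : Ω → Fin d → Fin 2) (X Y : Fin 2 → Fin d → Ω → ℝ)
    (hI : Measurable I) (hI' : Measurable I')
    (hX : ∀ j k, Measurable (X j k)) (hY : ∀ j k, Measurable (Y j k))
    (hIndep : iIndepFun (fgmFamily d I X) P)
    (hIndep' : iIndepFun (fgmFamily d I' Y) P)
    (hXcdf_min : ∀ k x, (P {ω | X 0 k ω ≤ x}).toReal = 1 - (1 - F k x) ^ 2)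
    (hXcdf_max : ∀ k x, (P {ω | X 1 k ω ≤ x}).toReal = (F k x) ^ 2)
    (hYcdf_min : ∀ k x, (P {ω | Y 0 k ω ≤ x}).toReal = 1 - (1 - F k x) ^ 2)
    (hYcdf_max : ∀ k x, (P {ω | Y 1 k ω ≤ x}).toReal = (F k x) ^ 2)
    (hsm : ∀ φ : (Fin d → ℝ) → ℝ, Supermodular φ →
      ∫ ω, φ (fun k => ((I ω k : ℕ) : ℝ)) ∂P
        ≤ ∫ ω, φ (fun k => ((I' ω k : ℕ) : ℝ)) ∂P) :
    ∀ ψ : (Fin d → ℝ) → ℝ, Measurable ψ → (∃ C : ℝ, ∀ x, |ψ x| ≤ C) →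
      Supermodular ψ →
      ∫ ω, ψ (fun k =>
          (1 - ((I ω k : ℕ) : ℝ)) * X 0 k ω + ((I ω k : ℕ) : ℝ) * X 1 k ω) ∂P
        ≤ ∫ ω, ψ (fun k =>
            (1 - ((I' ω k : ℕ) : ℝ)) * Y 0 k ω + ((I' ω k : ℕ) : ℝ) * Y 1 k ω) ∂P := by
  intro ψ hψ hbdd hsmψ
  obtain ⟨C, hC⟩ := hbdd
  classical
  -- basic facts about F
  have hF01 : ∀ k x, 0 ≤ F k x ∧ F k x ≤ 1 := by
    intro k x
    have h1 : (0 : ℝ) ≤ 1 - (1 - F k x) ^ 2 := by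
      rw [← hXcdf_min k x]; exact ENNReal.toReal_nonneg
    have h2 : (F k x) ^ 2 ≤ 1 := by
      rw [← hXcdf_max k x]
      have hle : P {ω | X 1 k ω ≤ x} ≤ 1 := prob_le_one
      have := ENNReal.toReal_le_toReal (measure_ne_top P _) ENNReal.one_ne_top |>.mpr hle
      simpa using this
    constructor <;> nlinarith
  -- the cdf values as measures of Iic under the pushforward laws
  have hmapIic : ∀ (W : Ω → ℝ), Measurable W → ∀ x : ℝ,
      (P.map W) (Iic x) = P {ω | W ω ≤ x} :=
    fun W hW x => Measure.map_apply hW measurableSet_Iic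
  -- construct the marginal measures ν k with cdf F k
  have hex : ∀ k : Fin d, ∃ ν : Measure ℝ, IsProbabilityMeasure ν ∧
      ∀ x, ν (Iic x) = ENNReal.ofReal (F k x) := by
    intro k
    haveI : IsProbabilityMeasure (P.map (X 1 k)) :=
      Measure.isProbabilityMeasure_map (hX 1 k).aemeasurable
    refine exists_measure_cdf (F k) (P.map (X 1 k)) (fun x => ?_) (fun x => (hF01 k x).1)
    rw [hmapIic _ (hX 1 k) x, hXcdf_max k x]
  choose ν hν1 hν2 using hex
  haveI := hν1
  have hνIic : ∀ k x, ((ν k) (Iic x)).toReal = F k x := by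
    intro k x
    rw [hν2 k x, ENNReal.toReal_ofReal (hF01 k x).1]
  -- identification of the laws of the order statistics
  have hminmax : ∀ (W : Ω → ℝ) (k : Fin d), Measurable W →
      (∀ x, (P {ω | W ω ≤ x}).toReal = 1 - (1 - F k x) ^ 2) →
      P.map W = ((ν k).prod (ν k)).map (fun p => min p.1 p.2) := by
    intro W k hW hcdf
    haveI : IsProbabilityMeasure (P.map W) := Measure.isProbabilityMeasure_map hW.aemeasurable
    haveI : IsProbabilityMeasure (((ν k).prod (ν k)).map (fun p : ℝ × ℝ => min p.1 p.2)) :=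
      Measure.isProbabilityMeasure_map (measurable_fst.min measurable_snd).aemeasurable
    refine ext_iic_toReal _ _ (fun x => ?_)
    rw [hmapIic _ hW x, hcdf x, map_min_Iic_toReal (ν k) x, hνIic k x]
  have hminmax' : ∀ (W : Ω → ℝ) (k : Fin d), Measurable W →
      (∀ x, (P {ω | W ω ≤ x}).toReal = (F k x) ^ 2) →
      P.map W = ((ν k).prod (ν k)).map (fun p => max p.1 p.2) := by
    intro W k hW hcdf
    haveI : IsProbabilityMeasure (P.map W) := Measure.isProbabilityMeasure_map hW.aemeasurable
    haveI : IsProbabilityMeasure (((ν k).prod (ν k)).map (fun p : ℝ × ℝ => max p.1 p.2)) :=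
      Measure.isProbabilityMeasure_map (measurable_fst.max measurable_snd).aemeasurable
    refine ext_iic_toReal _ _ (fun x => ?_)
    rw [hmapIic _ hW x, hcdf x, map_max_Iic_toReal (ν k) x, hνIic k x]
  -- the two key integral identities
  have e1 := fgm_integral_eq P d I X hI hX hIndep ν
    (fun k => hminmax (X 0 k) k (hX 0 k) (hXcdf_min k))
    (fun k => hminmax' (X 1 k) k (hX 1 k) (hXcdf_max k)) ψ hψ C hC
  have e2 := fgm_integral_eq P d I' Y hI' hY hIndep' ν
    (fun k => hminmax (Y 0 k) k (hY 0 k) (hYcdf_min k))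
    (fun k => hminmax' (Y 1 k) k (hY 1 k) (hYcdf_max k)) ψ hψ C hC
  rw [e1, e2]
  -- supermodularity of the averaged function
  haveI : IsProbabilityMeasure (Measure.pi fun k => (ν k).prod (ν k)) := inferInstance
  refine hsm (fun x : Fin d → ℝ =>
    ∫ w, ψ (fun k => (1 - x k) * min (w k).1 (w k).2 + x k * max (w k).1 (w k).2)
      ∂(Measure.pi fun k => (ν k).prod (ν k))) ?_
  have := supermodular_integral (d := d) (Measure.pi fun k => (ν k).prod (ν k))
    (fun w k => min (w k).1 (w k).2) (fun w k => max (w k).1 (w k).2)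
    (measurable_pi_iff.mpr fun k =>
      ((measurable_pi_apply k).fst).min ((measurable_pi_apply k).snd))
    (measurable_pi_iff.mpr fun k =>
      ((measurable_pi_apply k).fst).max ((measurable_pi_apply k).snd))
    (fun w k => min_le_max) ψ hψ C hC hsmψ
  exact this
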